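/- Let 𝔉 be a union-closed family of subsets of X with |X| = n, let U(𝔉) = ⋃_θ φ_{wθ}(𝔉) be its invariant upward-closed family, and let rk(𝔉) = min{ |η| : η ∈ min(U(𝔉)) }. Then 2^{n − rk(𝔉)} ≤ |𝔉| ≤ Σ_{i ≥ rk(𝔉)} C(n, i), and both bounds are tight (attained by suitable union-closed families). -/

import Mathlib

open Finset

variable {α : Type*} [DecidableEq α]

/-- A family is union-closed if it is closed under pairwise unions. -/
def UnionClosed (F : Finset (Finset α)) : Prop := ∀ f ∈ F, ∀ g ∈ F, f ∪ g ∈ F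

/-- One rising step: φ_{S,a}(z) = z ∪ {a} if z ∪ {a} ∉ S, and z otherwise. -/
def riseStep (S : Finset (Finset α)) (a : α) (z : Finset α) : Finset α :=
  if insert a z ∈ S then z else insert a z

/-- Iterated rising function along a word (list of letters): at each step the
current family is replaced by its image and the next letter is risen. -/
def riseWord (S : Finset (Finset α)) : List α → Finset α → Finset α
  | [], z => z
  | a :: u, z => riseWord (S.image (riseStep S a)) u (riseStep S a z)

/-- The section of a family along (a prefix of) a word. -/
def riseSections (S : Finset (Finset α)) : List α → Finset (Finset α)
  | [] => S
  | a :: u => riseSections (S.image (riseStep S a)) u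

/-- The set of minimal elements of a family (under inclusion). -/
def minsF (F : Finset (Finset α)) : Finset (Finset α) :=
  F.filter fun h => ∀ g ∈ F, g ⊆ h → g = h

/-- The operator z ↦ z* = ⋃ { h ∈ F : h ⊆ z }. -/
def starOp (F : Finset (Finset α)) (z : Finset α) : Finset α :=
  (F.filter fun f => f ⊆ z).sup id

/-- The fiber Fib(g) = { h ∈ min(F)↑ : h* = g }. -/
def FibS (F : Finset (Finset α)) (g : Finset α) : Set (Finset α) :=
  {h | (∃ m ∈ minsF F, m ⊆ h) ∧ starOp F h = g}

/-- The invariant upward-closed family U(𝔉) = ⋃_{θ ∈ 𝔖_X} φ_{wθ}(𝔉). -/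
def invU {α : Type*} [DecidableEq α] [Fintype α]
    (F : Finset (Finset α)) (w : List α) : Finset (Finset α) :=
  (Finset.univ : Finset (Equiv.Perm α)).biUnion fun θ => F.image (riseWord F (w.map θ))

/-- rk(𝔉) = min{ |η| : η ∈ min(U(𝔉)) }. -/
noncomputable def rkF {α : Type*} [DecidableEq α] [Fintype α]
    (F : Finset (Finset α)) (w : List α) : ℕ :=
  sInf {k : ℕ | ∃ η ∈ minsF (invU F w), η.card = k}

/-! ### Auxiliary lemmas -/

lemma riseStep_injOn (S : Finset (Finset α)) (a : α) :
    Set.InjOn (riseStep S a) ↑S := by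
  intro z1 h1 z2 h2 he
  simp only [Finset.mem_coe] at h1 h2
  by_cases h3 : insert a z1 ∈ S <;> by_cases h4 : insert a z2 ∈ S <;>
    simp only [riseStep, h3, h4, if_true, if_false] at he
  · exact he
  · exact absurd (he ▸ h1) h4
  · exact absurd (he ▸ h2) h3
  · have ha1 : a ∉ z1 := fun ha => h3 (by rwa [Finset.insert_eq_self.2 ha])
    have ha2 : a ∉ z2 := fun ha => h4 (by rwa [Finset.insert_eq_self.2 ha])
    rw [← Finset.erase_insert ha1, ← Finset.erase_insert ha2, he]

lemma riseSections_card (S : Finset (Finset α)) (u : List α) :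
    (riseSections S u).card = S.card := by
  induction u generalizing S with
  | nil => rfl
  | cons a u ih =>
    rw [riseSections, ih, Finset.card_image_of_injOn (riseStep_injOn S a)]

lemma image_riseWord (S : Finset (Finset α)) (u : List α) :
    S.image (riseWord S u) = riseSections S u := by
  induction u generalizing S with
  | nil => simp [riseWord, riseSections, Finset.image_id']
  | cons a u ih =>
    show S.image (fun z => riseWord (S.image (riseStep S a)) u (riseStep S a z)) = _
    rw [riseSections, ← ih]
    rw [Finset.image_image]
    rfl

/-- `S` is risen at `a`. -/
def ArisenAt (S : Finset (Finset α)) (a : α) : Prop := ∀ z ∈ S, insert a z ∈ S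

lemma arisenAt_image_self (S : Finset (Finset α)) (a : α) :
    ArisenAt (S.image (riseStep S a)) a := by
  intro z hz
  simp only [Finset.mem_image] at hz ⊢
  obtain ⟨y, hy, rfl⟩ := hz
  by_cases h : insert a y ∈ S
  · rw [riseStep, if_pos h]
    exact ⟨insert a y, h, by rw [riseStep, Finset.insert_idem, if_pos h]⟩
  · rw [riseStep, if_neg h, Finset.insert_idem]
    exact ⟨y, hy, by rw [riseStep, if_neg h]⟩

lemma arisenAt_image (S : Finset (Finset α)) (a b : α) (h : ArisenAt S a) :
    ArisenAt (S.image (riseStep S b)) a := by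
  intro wz hw
  simp only [Finset.mem_image] at hw ⊢
  obtain ⟨z, hz, rfl⟩ := hw
  by_cases hb : insert b z ∈ S
  · rw [riseStep, if_pos hb]
    have haz : insert a z ∈ S := h z hz
    have h2 : insert b (insert a z) ∈ S := by
      rw [Finset.insert_comm]; exact h _ hb
    exact ⟨insert a z, haz, by rw [riseStep, if_pos h2]⟩
  · rw [riseStep, if_neg hb]
    have haz : insert a z ∈ S := h z hz
    by_cases h2 : insert b (insert a z) ∈ S
    · refine ⟨insert b (insert a z), h2, ?_⟩
      rw [riseStep, if_pos (by rw [Finset.insert_idem]; exact h2), Finset.insert_comm]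
    · refine ⟨insert a z, haz, ?_⟩
      rw [riseStep, if_neg h2, Finset.insert_comm]

lemma arisenAt_riseSections (S : Finset (Finset α)) (u : List α) (a : α)
    (h : a ∈ u ∨ ArisenAt S a) : ArisenAt (riseSections S u) a := by
  induction u generalizing S with
  | nil => exact h.resolve_left (by simp)
  | cons b u ih =>
    rw [riseSections]
    apply ih
    rcases h with h | h
    · rcases List.mem_cons.1 h with rfl | h
      · exact Or.inr (arisenAt_image_self S a)
      · exact Or.inl h
    · exact Or.inr (arisenAt_image S a b h)

/-- Upward-closed family. -/
def UpcF (S : Finset (Finset α)) : Prop := ∀ z ∈ S, ∀ z', z ⊆ z' → z' ∈ S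

lemma upc_of_arisen (S : Finset (Finset α)) (h : ∀ a, ArisenAt S a) : UpcF S := by
  intro z hz z' hzz
  have key : ∀ d : Finset α, ∀ y ∈ S, y ∪ d ∈ S := by
    intro d
    induction d using Finset.induction_on with
    | empty => intro y hy; simpa using hy
    | insert _ _ hnd ih =>
      intro y hy
      rw [Finset.union_insert]
      exact h _ _ (ih y hy)
  have := key (z' \ z) z hz
  rwa [Finset.union_sdiff_of_subset hzz] at this

lemma upc_riseSections (S : Finset (Finset α)) (u : List α) (hall : ∀ a : α, a ∈ u) :
    UpcF (riseSections S u) :=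
  upc_of_arisen _ fun a => arisenAt_riseSections S u a (Or.inl (hall a))

lemma riseWord_eq_self (S : Finset (Finset α)) (hS : UpcF S) (u : List α) :
    ∀ z ∈ S, riseWord S u z = z := by
  induction u with
  | nil => intro z _; rfl
  | cons a u ih =>
    intro z hz
    have h1 : S.image (riseStep S a) = S := by
      have heq : Set.EqOn (riseStep S a) id ↑S := fun y hy =>
        if_pos (hS y (Finset.mem_coe.1 hy) _ (Finset.subset_insert a y))
      rw [Finset.image_congr heq, Finset.image_id]
    show riseWord (S.image (riseStep S a)) u (riseStep S a z) = z
    rw [h1, show riseStep S a z = z from if_pos (hS z hz _ (Finset.subset_insert a z))]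
    exact ih z hz

lemma invU_of_upc {α : Type*} [DecidableEq α] [Fintype α]
    (S : Finset (Finset α)) (hS : UpcF S) (w : List α) : invU S w = S := by
  have himg : ∀ θ : Equiv.Perm α, S.image (riseWord S (w.map θ)) = S := fun θ => by
    rw [Finset.image_congr (g := id) (fun z hz => riseWord_eq_self S hS _ z hz), Finset.image_id]
  ext z
  simp only [invU, Finset.mem_biUnion, Finset.mem_univ, true_and, himg]
  exact ⟨fun ⟨_, h⟩ => h, fun h => ⟨1, h⟩⟩

lemma minsF_nonempty (F : Finset (Finset α)) (h : F.Nonempty) : (minsF F).Nonempty := by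
  obtain ⟨η, hη, hmin⟩ := F.exists_min_image Finset.card h
  exact ⟨η, Finset.mem_filter.2 ⟨hη, fun g hg hsub =>
    Finset.eq_of_subset_of_card_le hsub (hmin g hg)⟩⟩

lemma exists_min_subset (F : Finset (Finset α)) : ∀ z ∈ F, ∃ m ∈ minsF F, m ⊆ z := by
  intro z
  induction z using Finset.strongInductionOn with
  | _ z ih =>
    intro hz
    by_cases h : ∀ g ∈ F, g ⊆ z → g = z
    · exact ⟨z, Finset.mem_filter.2 ⟨hz, h⟩, Finset.Subset.refl z⟩
    · push_neg at h
      obtain ⟨g, hgF, hgz, hne⟩ := h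
      obtain ⟨m, hm, hmg⟩ := ih g (Finset.ssubset_iff_subset_ne.2 ⟨hgz, hne⟩) hgF
      exact ⟨m, hm, hmg.trans hgz⟩

lemma card_supersets {α : Type*} [DecidableEq α] [Fintype α] (η : Finset α) :
    ((Finset.univ : Finset (Finset α)).filter fun s => η ⊆ s).card =
      2 ^ (Fintype.card α - η.card) := by
  rw [← Finset.card_compl η, ← Finset.card_powerset]
  apply Finset.card_bij' (fun s _ => s \ η) (fun t _ => t ∪ η)
  · intro s hs
    simp only [Finset.mem_powerset]
    intro x hx
    simp only [Finset.mem_sdiff] at hx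
    simpa using hx.2
  · intro t ht
    simp only [Finset.mem_filter, Finset.mem_univ, true_and]
    exact Finset.subset_union_right
  · intro s hs
    exact Finset.sdiff_union_of_subset (Finset.mem_filter.1 hs).2
  · intro t ht
    simp only [Finset.mem_powerset] at ht
    rw [Finset.union_sdiff_distrib, Finset.sdiff_self, Finset.union_empty,
      Finset.sdiff_eq_self_iff_disjoint]
    exact Finset.disjoint_left.2 fun x hx => by simpa using ht hx

lemma card_large_sets {α : Type*} [DecidableEq α] [Fintype α] (k : ℕ) :
    ((Finset.univ : Finset (Finset α)).filter fun s => k ≤ s.card).card =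
      ∑ i ∈ Finset.Icc k (Fintype.card α), (Fintype.card α).choose i := by
  have heq : (Finset.univ : Finset (Finset α)).filter (fun s => k ≤ s.card) =
      (Finset.Icc k (Fintype.card α)).biUnion
        (fun i => (Finset.univ : Finset (Finset α)).filter fun s => s.card = i) := by
    ext s
    simp only [Finset.mem_filter, Finset.mem_univ, true_and, Finset.mem_biUnion,
      Finset.mem_Icc]
    constructor
    · intro h
      exact ⟨s.card, ⟨h, Finset.card_le_univ s⟩, rfl⟩
    · rintro ⟨i, ⟨hki, _⟩, rfl⟩
      exact hki
  rw [heq, Finset.card_biUnion]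
  · refine Finset.sum_congr rfl fun i _ => ?_
    have : (Finset.univ : Finset (Finset α)).filter (fun s => s.card = i) =
        Finset.powersetCard i (Finset.univ : Finset α) := by
      rw [Finset.powersetCard_eq_filter, Finset.powerset_univ]
    rw [this, Finset.card_powersetCard, Finset.card_univ]
  · intro i _ j _ hij
    apply Finset.disjoint_left.2
    intro s hs hs'
    simp only [Finset.mem_filter] at hs hs'
    exact hij (hs.2 ▸ hs'.2)

lemma sInf_eq_of_unique {k : ℕ} {T : Set ℕ} (h1 : k ∈ T) (h2 : ∀ j ∈ T, j = k) :
    sInf T = k :=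
  h2 _ (Nat.sInf_mem ⟨k, h1⟩)

lemma minsF_supersets {α : Type*} [DecidableEq α] [Fintype α] (t : Finset α) :
    minsF ((Finset.univ : Finset (Finset α)).filter fun s => t ⊆ s) = {t} := by
  ext h
  simp only [minsF, Finset.mem_filter, Finset.mem_univ, true_and, Finset.mem_singleton]
  constructor
  · rintro ⟨hth, hmin⟩
    exact (hmin t (Finset.Subset.refl t) hth).symm
  · rintro rfl
    exact ⟨Finset.Subset.refl h, fun g hg hsub => Finset.Subset.antisymm hsub hg⟩

lemma minsF_large_sets {α : Type*} [DecidableEq α] [Fintype α] (k : ℕ) :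
    minsF ((Finset.univ : Finset (Finset α)).filter fun s => k ≤ s.card) =
      (Finset.univ : Finset (Finset α)).filter fun s => s.card = k := by
  ext h
  simp only [minsF, Finset.mem_filter, Finset.mem_univ, true_and]
  constructor
  · rintro ⟨hk, hmin⟩
    by_contra hne
    have hlt : k < h.card := lt_of_le_of_ne hk (Ne.symm hne)
    obtain ⟨a, ha⟩ := Finset.card_pos.1 (lt_of_le_of_lt (Nat.zero_le k) hlt)
    have herase : h.erase a = h := hmin (h.erase a)
      (by rw [Finset.card_erase_of_mem ha]; omega)
      (Finset.erase_subset _ _)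
    exact (Finset.erase_eq_self.1 herase) ha
  · rintro heq
    exact ⟨heq.ge, fun g hg hsub =>
      Finset.eq_of_subset_of_card_le hsub (le_trans heq.le hg)⟩

lemma mem_of_mem_minsF {F : Finset (Finset α)} {η : Finset α} (h : η ∈ minsF F) : η ∈ F := by
  simp only [minsF, Finset.mem_filter] at h
  exact h.1

theorem stmt_9 {α : Type*} [DecidableEq α] [Fintype α]
    (F : Finset (Finset α)) (hF : UnionClosed F) (hFne : F.Nonempty)
    (w : List α) (hnd : w.Nodup) (hall : ∀ x : α, x ∈ w) :
    (2 ^ (Fintype.card α - rkF F w) ≤ F.card ∧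
      F.card ≤ ∑ i ∈ Finset.Icc (rkF F w) (Fintype.card α), (Fintype.card α).choose i) ∧
    ∀ k ≤ Fintype.card α,
      (∃ G : Finset (Finset α), UnionClosed G ∧ G.Nonempty ∧ rkF G w = k ∧
        G.card = 2 ^ (Fintype.card α - k)) ∧
      (∃ G : Finset (Finset α), UnionClosed G ∧ G.Nonempty ∧ rkF G w = k ∧
        G.card = ∑ i ∈ Finset.Icc k (Fintype.card α), (Fintype.card α).choose i) := by
  classical
  have hallmap : ∀ θ : Equiv.Perm α, ∀ a : α, a ∈ w.map θ := by
    intro θ a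
    exact List.mem_map.2 ⟨θ.symm a, hall _, θ.apply_symm_apply a⟩
  constructor
  · -- the two bounds
    have hUne : (invU F w).Nonempty := by
      obtain ⟨f, hf⟩ := hFne
      exact ⟨riseWord F (w.map (1 : Equiv.Perm α)) f,
        Finset.mem_biUnion.2 ⟨1, Finset.mem_univ _, Finset.mem_image_of_mem _ hf⟩⟩
    have hSet : {k : ℕ | ∃ η ∈ minsF (invU F w), η.card = k}.Nonempty := by
      obtain ⟨η, hη⟩ := minsF_nonempty _ hUne
      exact ⟨η.card, η, hη, rfl⟩
    have hrk : rkF F w ∈ {k : ℕ | ∃ η ∈ minsF (invU F w), η.card = k} := Nat.sInf_mem hSet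
    obtain ⟨η, hηmin, hηcard⟩ := hrk
    constructor
    · -- lower bound
      have hηU : η ∈ invU F w := mem_of_mem_minsF hηmin
      rw [invU, Finset.mem_biUnion] at hηU
      obtain ⟨θ, _, hθ⟩ := hηU
      rw [image_riseWord] at hθ
      have hG : UpcF (riseSections F (w.map θ)) := upc_riseSections _ _ (hallmap θ)
      have hsub : (Finset.univ : Finset (Finset α)).filter (fun s => η ⊆ s) ⊆
          riseSections F (w.map θ) := fun s hs => hG η hθ s (Finset.mem_filter.1 hs).2
      calc 2 ^ (Fintype.card α - rkF F w)
          = ((Finset.univ : Finset (Finset α)).filter fun s => η ⊆ s).card := by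
            rw [card_supersets, hηcard]
        _ ≤ (riseSections F (w.map θ)).card := Finset.card_le_card hsub
        _ = F.card := riseSections_card _ _
    · -- upper bound
      have hmemrk : ∀ z ∈ invU F w, rkF F w ≤ z.card := by
        intro z hz
        obtain ⟨m, hm, hmz⟩ := exists_min_subset _ z hz
        calc rkF F w ≤ m.card := Nat.sInf_le ⟨m, hm, rfl⟩
          _ ≤ z.card := Finset.card_le_card hmz
      have hsub : riseSections F (w.map (1 : Equiv.Perm α)) ⊆
          (Finset.univ : Finset (Finset α)).filter fun s => rkF F w ≤ s.card := by
        intro z hz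
        refine Finset.mem_filter.2 ⟨Finset.mem_univ _, hmemrk z ?_⟩
        rw [invU, Finset.mem_biUnion]
        exact ⟨1, Finset.mem_univ _, by rw [image_riseWord]; exact hz⟩
      calc F.card = (riseSections F (w.map (1 : Equiv.Perm α))).card :=
            (riseSections_card _ _).symm
        _ ≤ ((Finset.univ : Finset (Finset α)).filter fun s => rkF F w ≤ s.card).card :=
            Finset.card_le_card hsub
        _ = _ := card_large_sets _
  · -- tightness
    intro k hk
    constructor
    · -- lower bound attained
      obtain ⟨t, -, htcard⟩ := Finset.exists_subset_card_eq
        (show k ≤ (Finset.univ : Finset α).card by rwa [Finset.card_univ])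
      refine ⟨(Finset.univ : Finset (Finset α)).filter fun s => t ⊆ s, ?_, ?_, ?_, ?_⟩
      · intro f hf g hg
        simp only [Finset.mem_filter, Finset.mem_univ, true_and] at hf hg ⊢
        exact hf.trans Finset.subset_union_left
      · exact ⟨t, by simp⟩
      · have hupc : UpcF ((Finset.univ : Finset (Finset α)).filter fun s => t ⊆ s) := by
          intro z hz z' hzz
          simp only [Finset.mem_filter, Finset.mem_univ, true_and] at hz ⊢
          exact hz.trans hzz
        rw [rkF, invU_of_upc _ hupc, minsF_supersets]
        apply sInf_eq_of_unique (k := k)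
        · exact ⟨t, Finset.mem_singleton_self t, htcard⟩
        · rintro j ⟨η, hη, rfl⟩
          rw [Finset.mem_singleton] at hη
          rw [hη, htcard]
      · rw [card_supersets, htcard]
    · -- upper bound attained
      obtain ⟨t, -, htcard⟩ := Finset.exists_subset_card_eq
        (show k ≤ (Finset.univ : Finset α).card by rwa [Finset.card_univ])
      refine ⟨(Finset.univ : Finset (Finset α)).filter fun s => k ≤ s.card, ?_, ?_, ?_, ?_⟩
      · intro f hf g hg
        simp only [Finset.mem_filter, Finset.mem_univ, true_and] at hf hg ⊢
        exact hf.trans (Finset.card_le_card Finset.subset_union_left)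
      · exact ⟨Finset.univ, by simp [Finset.card_univ, hk]⟩
      · have hupc : UpcF ((Finset.univ : Finset (Finset α)).filter fun s => k ≤ s.card) := by
          intro z hz z' hzz
          simp only [Finset.mem_filter, Finset.mem_univ, true_and] at hz ⊢
          exact hz.trans (Finset.card_le_card hzz)
        rw [rkF, invU_of_upc _ hupc, minsF_large_sets]
        apply sInf_eq_of_unique (k := k)
        · exact ⟨t, Finset.mem_filter.2 ⟨Finset.mem_univ _, htcard⟩, htcard⟩
        · rintro j ⟨η, hη, rfl⟩
          exact (Finset.mem_filter.1 hη).2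
      · exact card_large_sets _
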